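/- arXiv:1807.08846 — 6 statements merged into one kernel-verified Lean document; each statement's English description precedes it below -/
import Mathlib

section
/- For any s,t >= 1, the locally exchanged twisted cube LeTQ(s,t) is isomorphic to LeTQ(t,s). -/
/-- Flip bit `k` of the binary string `x`. -/
def bflip {n : ℕ} (x : Fin n → Bool) (k : Fin n) : Fin n → Bool :=
  Function.update x k (!(x k))

/-- Locally twisted cube adjacency on `n`-bit binary strings:
either flip bit `k` for some `k ≤ 1`; or, for some `k ≥ 2`, flip bits `k` and `k-1`
when bit 0 is `1`, resp. flip only bit `k` when bit 0 is `0`. -/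
def cubeAdj (n : ℕ) (x y : Fin n → Bool) : Prop :=
  (∃ k : Fin n, (k : ℕ) ≤ 1 ∧ y = bflip x k) ∨
  (∃ k : Fin n, 2 ≤ (k : ℕ) ∧
    ((∃ h0 : 0 < n, x ⟨0, h0⟩ = true ∧
        y = bflip (bflip x k) ⟨(k : ℕ) - 1, lt_of_le_of_lt (Nat.sub_le _ _) k.isLt⟩) ∨
     (∃ h0 : 0 < n, x ⟨0, h0⟩ = false ∧ y = bflip x k)))

/-- The locally twisted cube `LTQ_n`. -/
def LTQ (n : ℕ) : SimpleGraph (Fin n → Bool) where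
  Adj x y := x ≠ y ∧ (cubeAdj n x y ∨ cubeAdj n y x)
  symm := ⟨fun _ _ h => ⟨h.1.symm, h.2.symm⟩⟩
  loopless := ⟨fun _ h => h.1 rfl⟩

/-- A vertex of `LeTQ(s,t)`: the `a`-bits, the `b`-bits and the bit `c`. -/
abbrev LeTQVert (s t : ℕ) := (Fin s → Bool) × (Fin t → Bool) × Bool

/-- One-sided adjacency condition of the locally exchanged twisted cube. -/
def LeTQAdjOne (s t : ℕ) (u v : LeTQVert s t) : Prop :=
  (u.1 = v.1 ∧ u.2.1 = v.2.1 ∧ u.2.2 = !v.2.2) ∨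
  (u.2.2 = true ∧ v.2.2 = true ∧ u.1 = v.1 ∧ cubeAdj t u.2.1 v.2.1) ∨
  (u.2.2 = false ∧ v.2.2 = false ∧ u.2.1 = v.2.1 ∧ cubeAdj s u.1 v.1)

/-- The locally exchanged twisted cube `LeTQ(s,t)`. -/
def LeTQ (s t : ℕ) : SimpleGraph (LeTQVert s t) where
  Adj u v := u ≠ v ∧ (LeTQAdjOne s t u v ∨ LeTQAdjOne s t v u)
  symm := ⟨fun _ _ h => ⟨h.1.symm, h.2.symm⟩⟩
  loopless := ⟨fun _ h => h.1 rfl⟩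

lemma adjOne_swap (s t : ℕ) (u v : LeTQVert s t) :
    LeTQAdjOne s t u v ↔ LeTQAdjOne t s (u.2.1, u.1, !u.2.2) (v.2.1, v.1, !v.2.2) := by
  unfold LeTQAdjOne
  dsimp only
  constructor
  · rintro (⟨h1, h2, h3⟩ | ⟨h1, h2, h3, h4⟩ | ⟨h1, h2, h3, h4⟩)
    · exact Or.inl ⟨h2, h1, by rw [h3]⟩
    · exact Or.inr (Or.inr ⟨by simp [h1], by simp [h2], h3, h4⟩)
    · exact Or.inr (Or.inl ⟨by simp [h1], by simp [h2], h3, h4⟩)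
  · rintro (⟨h1, h2, h3⟩ | ⟨h1, h2, h3, h4⟩ | ⟨h1, h2, h3, h4⟩)
    · refine Or.inl ⟨h2, h1, ?_⟩
      cases hb : v.2.2 <;> simp_all
    · exact Or.inr (Or.inr ⟨by simpa using h1, by simpa using h2, h3, h4⟩)
    · exact Or.inr (Or.inl ⟨by simpa using h1, by simpa using h2, h3, h4⟩)

/-- LeTQ(s,t) ≅ LeTQ(t,s). -/
theorem stmt1 (s t : ℕ) (hs : 1 ≤ s) (ht : 1 ≤ t) :
    Nonempty (LeTQ s t ≃g LeTQ t s) := by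
  refine ⟨⟨⟨fun u => (u.2.1, u.1, !u.2.2), fun u => (u.2.1, u.1, !u.2.2),
    fun u => by simp, fun u => by simp⟩, ?_⟩⟩
  intro u v
  show (LeTQ t s).Adj _ _ ↔ (LeTQ s t).Adj u v
  constructor
  · rintro ⟨hne, h⟩
    refine ⟨fun he => hne (by rw [he]), ?_⟩
    rcases h with h | h
    · exact Or.inl ((adjOne_swap s t u v).2 h)
    · exact Or.inr ((adjOne_swap s t v u).2 h)
  · rintro ⟨hne, h⟩
    refine ⟨fun he => hne ?_, ?_⟩
    · simp only [Equiv.coe_fn_mk] at he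
      injection he with h1 h23
      injection h23 with h2 h3
      exact Prod.ext h2 (Prod.ext h1 (Bool.not_inj h3))
    · rcases h with h | h
      · exact Or.inl ((adjOne_swap s t u v).1 h)
      · exact Or.inr ((adjOne_swap s t v u).1 h)
end

section
/- In LeTQ(s,t) with s,t >= 1, every vertex whose last bit is 0 has degree s+1, and every vertex whose last bit is 1 has degree t+1. -/
section Aux
variable {n : ℕ}

lemma bflip_apply_self (x : Fin n → Bool) (k : Fin n) : bflip x k k = !(x k) := by
  simp [bflip]

lemma bflip_apply_ne (x : Fin n → Bool) (k i : Fin n) (h : i ≠ k) : bflip x k i = x i := by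
  simp [bflip, Function.update_of_ne h]

lemma bflip_bflip (x : Fin n → Bool) (k : Fin n) : bflip (bflip x k) k = x := by
  funext i
  by_cases h : i = k
  · subst h; simp [bflip]
  · simp [bflip, Function.update_of_ne h]

lemma bflip_comm (x : Fin n → Bool) (j k : Fin n) (h : j ≠ k) :
    bflip (bflip x j) k = bflip (bflip x k) j := by
  unfold bflip
  rw [Function.update_of_ne (Ne.symm h) (!(x j)) x, Function.update_of_ne h (!(x k)) x,
    Function.update_comm h]

/-- The canonical neighbor of `x` in dimension `k` in the locally twisted cube. -/
def nb (x : Fin n → Bool) (k : Fin n) : Fin n → Bool :=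
  if (k : ℕ) ≤ 1 then bflip x k
  else if x ⟨0, k.pos⟩ then
    bflip (bflip x k) ⟨(k : ℕ) - 1, lt_of_le_of_lt (Nat.sub_le _ _) k.isLt⟩
  else bflip x k

lemma nb_apply_of_lt (x : Fin n → Bool) {k i : Fin n} (h : (k : ℕ) < (i : ℕ)) :
    nb x k i = x i := by
  have hik : i ≠ k := Fin.ne_of_val_ne (Nat.ne_of_gt h)
  unfold nb
  split_ifs with h1 h2
  · exact bflip_apply_ne _ _ _ hik
  · rw [bflip_apply_ne _ _ _ (Fin.ne_of_val_ne (show (i : ℕ) ≠ (k : ℕ) - 1 by omega)),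
      bflip_apply_ne _ _ _ hik]
  · exact bflip_apply_ne _ _ _ hik

lemma nb_apply_self (x : Fin n → Bool) (k : Fin n) : nb x k k = !(x k) := by
  unfold nb
  split_ifs with h1 h2
  · exact bflip_apply_self _ _
  · rw [bflip_apply_ne _ _ _ (Fin.ne_of_val_ne (show (k : ℕ) ≠ (k : ℕ) - 1 by omega)),
      bflip_apply_self]
  · exact bflip_apply_self _ _

lemma nb_ne (x : Fin n → Bool) (k : Fin n) : nb x k ≠ x := fun h => by
  have := congrFun h k
  rw [nb_apply_self] at this
  simp at this

lemma nb_inj (x : Fin n → Bool) {j k : Fin n} (h : nb x j = nb x k) : j = k := by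
  by_contra hjk
  rcases lt_or_gt_of_ne (fun hv => hjk (Fin.ext hv) : (j : ℕ) ≠ (k : ℕ)) with hlt | hlt
  · have := congrFun h k
    rw [nb_apply_of_lt x hlt, nb_apply_self] at this
    simp at this
  · have := congrFun h j
    rw [nb_apply_of_lt x hlt, nb_apply_self] at this
    simp at this

lemma cubeAdj_nb (x : Fin n → Bool) (k : Fin n) : cubeAdj n x (nb x k) := by
  unfold nb
  split_ifs with h1 h2
  · exact Or.inl ⟨k, h1, rfl⟩
  · exact Or.inr ⟨k, by omega, Or.inl ⟨k.pos, h2, rfl⟩⟩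
  · exact Or.inr ⟨k, by omega, Or.inr ⟨k.pos, by simpa using h2, rfl⟩⟩

lemma cubeAdj_imp {x y : Fin n → Bool} (h : cubeAdj n x y) : ∃ k, y = nb x k := by
  rcases h with ⟨k, hk, rfl⟩ | ⟨k, hk, ⟨h0, hx0, rfl⟩ | ⟨h0, hx0, rfl⟩⟩
  · exact ⟨k, by rw [nb, if_pos hk]⟩
  · exact ⟨k, by rw [nb, if_neg (by omega), if_pos hx0]⟩
  · exact ⟨k, by rw [nb, if_neg (by omega), if_neg (by simp [hx0])]⟩

lemma cubeAdj_symm_imp {x y : Fin n → Bool} (h : cubeAdj n y x) : ∃ k, y = nb x k := by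
  rcases h with ⟨k, hk, hxy⟩ | ⟨k, hk, ⟨h0, hy0, hxy⟩ | ⟨h0, hy0, hxy⟩⟩
  · exact ⟨k, by rw [nb, if_pos hk, hxy, bflip_bflip]⟩
  · refine ⟨k, ?_⟩
    have hjk : (⟨(k : ℕ) - 1, lt_of_le_of_lt (Nat.sub_le _ _) k.isLt⟩ : Fin n) ≠ k :=
      Fin.ne_of_val_ne (show (k : ℕ) - 1 ≠ (k : ℕ) by omega)
    have h0j : (⟨0, h0⟩ : Fin n) ≠ ⟨(k : ℕ) - 1, lt_of_le_of_lt (Nat.sub_le _ _) k.isLt⟩ :=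
      Fin.ne_of_val_ne (show (0 : ℕ) ≠ (k : ℕ) - 1 by omega)
    have h0k : (⟨0, h0⟩ : Fin n) ≠ k := Fin.ne_of_val_ne (show (0 : ℕ) ≠ (k : ℕ) by omega)
    have hx0 : x ⟨0, h0⟩ = true := by
      rw [hxy, bflip_apply_ne _ _ _ h0j, bflip_apply_ne _ _ _ h0k, hy0]
    have hy : y = bflip (bflip x k)
        ⟨(k : ℕ) - 1, lt_of_le_of_lt (Nat.sub_le _ _) k.isLt⟩ := by
      rw [hxy, ← bflip_comm _ _ _ hjk, bflip_bflip, bflip_bflip]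
    rw [nb, if_neg (by omega), if_pos hx0, ← hy]
  · refine ⟨k, ?_⟩
    have h0k : (⟨0, h0⟩ : Fin n) ≠ k := Fin.ne_of_val_ne (show (0 : ℕ) ≠ (k : ℕ) by omega)
    have hx0 : x ⟨0, h0⟩ = false := by rw [hxy, bflip_apply_ne _ _ _ h0k, hy0]
    rw [nb, if_neg (by omega), if_neg (by simp [hx0]), hxy, bflip_bflip]

end Aux
lemma neighborSet_false (s t : ℕ) (a : Fin s → Bool) (b : Fin t → Bool) :
    (LeTQ s t).neighborSet (a, b, false) =
      insert ((a, b, true) : LeTQVert s t)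
        (Set.range fun k : Fin s => ((nb a k, b, false) : LeTQVert s t)) := by
  ext v
  simp only [SimpleGraph.mem_neighborSet, Set.mem_insert_iff, Set.mem_range]
  constructor
  · obtain ⟨a', b', c'⟩ := v
    rintro ⟨hne, h | h⟩ <;>
      rcases h with ⟨h1, h2, h3⟩ | ⟨h1, h2, h3, h4⟩ | ⟨h1, h2, h3, h4⟩
    · left; simp_all [Prod.ext_iff]
    · simp at h1
    · obtain ⟨k, hk⟩ := cubeAdj_imp h4
      right; exact ⟨k, by simp_all [Prod.ext_iff]⟩
    · left; simp_all [Prod.ext_iff]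
    · simp at h2
    · obtain ⟨k, hk⟩ := cubeAdj_symm_imp h4
      right; exact ⟨k, by simp_all [Prod.ext_iff]⟩
  · rintro (rfl | ⟨k, rfl⟩)
    · exact ⟨by simp [Prod.ext_iff], Or.inl (Or.inl ⟨rfl, rfl, by simp⟩)⟩
    · refine ⟨fun he => nb_ne a k (congrArg Prod.fst he).symm,
        Or.inl (Or.inr (Or.inr ⟨rfl, rfl, rfl, cubeAdj_nb a k⟩))⟩

lemma neighborSet_true (s t : ℕ) (a : Fin s → Bool) (b : Fin t → Bool) :
    (LeTQ s t).neighborSet (a, b, true) =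
      insert ((a, b, false) : LeTQVert s t)
        (Set.range fun k : Fin t => ((a, nb b k, true) : LeTQVert s t)) := by
  ext v
  simp only [SimpleGraph.mem_neighborSet, Set.mem_insert_iff, Set.mem_range]
  constructor
  · obtain ⟨a', b', c'⟩ := v
    rintro ⟨hne, h | h⟩ <;>
      rcases h with ⟨h1, h2, h3⟩ | ⟨h1, h2, h3, h4⟩ | ⟨h1, h2, h3, h4⟩
    · left; simp_all [Prod.ext_iff]
    · obtain ⟨k, hk⟩ := cubeAdj_imp h4
      right; exact ⟨k, by simp_all [Prod.ext_iff]⟩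
    · simp at h1
    · left; simp_all [Prod.ext_iff]
    · obtain ⟨k, hk⟩ := cubeAdj_symm_imp h4
      right; exact ⟨k, by simp_all [Prod.ext_iff]⟩
    · simp at h2
  · rintro (rfl | ⟨k, rfl⟩)
    · exact ⟨by simp [Prod.ext_iff], Or.inl (Or.inl ⟨rfl, rfl, by simp⟩)⟩
    · refine ⟨fun he => nb_ne b k (congrArg (fun w => w.2.1) he).symm,
        Or.inl (Or.inr (Or.inl ⟨rfl, rfl, rfl, cubeAdj_nb b k⟩))⟩

/-- Vertices with last bit 0 have degree s+1, those with last bit 1 have degree t+1. -/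
theorem stmt2 (s t : ℕ) (hs : 1 ≤ s) (ht : 1 ≤ t) (u : LeTQVert s t) :
    (u.2.2 = false → ((LeTQ s t).neighborSet u).ncard = s + 1) ∧
    (u.2.2 = true → ((LeTQ s t).neighborSet u).ncard = t + 1) := by
  obtain ⟨a, b, c⟩ := u
  constructor
  · rintro rfl
    rw [neighborSet_false]
    rw [Set.ncard_insert_of_notMem (by rintro ⟨k, hk⟩; simp [Prod.ext_iff] at hk)]
    have hinj : Function.Injective fun k : Fin s => ((nb a k, b, false) : LeTQVert s t) := by
      intro j k h
      rw [Prod.ext_iff] at h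
      exact nb_inj a h.1
    rw [← Set.image_univ, Set.ncard_image_of_injective _ hinj, Set.ncard_univ]
    simp [Nat.card_eq_fintype_card, Nat.add_comm]
  · rintro rfl
    rw [neighborSet_true]
    rw [Set.ncard_insert_of_notMem (by rintro ⟨k, hk⟩; simp [Prod.ext_iff] at hk)]
    have hinj : Function.Injective fun k : Fin t => ((a, nb b k, true) : LeTQVert s t) := by
      intro j k h
      rw [Prod.ext_iff, Prod.ext_iff] at h
      exact nb_inj b h.2.1
    rw [← Set.image_univ, Set.ncard_image_of_injective _ hinj, Set.ncard_univ]
    simp [Nat.card_eq_fintype_card, Nat.add_comm]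
end

section
/- For s,t >= 1, the locally exchanged twisted cube LeTQ(s,t) contains no triangle. -/
namespace Tri

variable {n : ℕ}

def FlipP (x y : Fin n → Bool) (p : Fin n → Prop) [DecidablePred p] : Prop :=
  ∀ i, y i = if p i then !(x i) else x i

lemma flip_iff {p : Fin n → Prop} [DecidablePred p] {x y : Fin n → Bool}
    (h : FlipP x y p) (i : Fin n) : (y i = x i) ↔ ¬ p i := by
  by_cases hp : p i <;> simp [hp, h i]

lemma comp_iff {p q : Fin n → Prop} [DecidablePred p] [DecidablePred q]
    {x y z : Fin n → Bool} (h1 : FlipP x y p) (h2 : FlipP y z q) (i : Fin n) :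
    (z i = x i) ↔ (p i ↔ q i) := by
  by_cases hp : p i <;> by_cases hq : q i <;> simp [hp, hq, h1 i, h2 i]

lemma FlipP.symm {p : Fin n → Prop} [DecidablePred p] {x y : Fin n → Bool}
    (h : FlipP x y p) : FlipP y x p := by
  intro i
  have hi := h i
  by_cases hp : p i <;> simp [hp] at hi ⊢ <;> simp [hi]

def SingE (x y : Fin n → Bool) : Prop :=
  ∃ k : Fin n, FlipP x y (· = k) ∧
    ((k : ℕ) ≤ 1 ∨ (2 ≤ (k : ℕ) ∧ x ⟨0, k.pos⟩ = false))

def PairE (x y : Fin n → Bool) : Prop :=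
  ∃ k k' : Fin n, FlipP x y (fun i => i = k ∨ i = k') ∧
    (k' : ℕ) + 1 = (k : ℕ) ∧ 2 ≤ (k : ℕ) ∧ x ⟨0, k.pos⟩ = true

def NEdge (x y : Fin n → Bool) : Prop := SingE x y ∨ PairE x y

lemma SingE.symm {x y : Fin n → Bool} (h : SingE x y) : SingE y x := by
  obtain ⟨k, hf, hs⟩ := h
  refine ⟨k, hf.symm, ?_⟩
  rcases hs with h1 | ⟨h2, h3⟩
  · exact Or.inl h1
  · refine Or.inr ⟨h2, ?_⟩
    have h0 := hf ⟨0, k.pos⟩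
    rw [if_neg] at h0
    · rw [h0]; exact h3
    · intro hh
      have := congrArg Fin.val hh
      simp at this
      omega

lemma PairE.symm {x y : Fin n → Bool} (h : PairE x y) : PairE y x := by
  obtain ⟨k, k', hf, h1, h2, h3⟩ := h
  refine ⟨k, k', hf.symm, h1, h2, ?_⟩
  have h0 := hf ⟨0, k.pos⟩
  rw [if_neg] at h0
  · rw [h0]; exact h3
  · rintro (hh | hh) <;>
    · have := congrArg Fin.val hh
      simp at this
      omega

lemma NEdge.symm {x y : Fin n → Bool} (h : NEdge x y) : NEdge y x := by
  rcases h with h | h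
  · exact Or.inl h.symm
  · exact Or.inr h.symm

lemma NEdge.irrefl {x : Fin n → Bool} (h : NEdge x x) : False := by
  rcases h with ⟨k, hf, -⟩ | ⟨k, k', hf, -⟩
  · have := hf k; simp at this
  · have := hf k; simp at this

lemma flipP_bflip (x : Fin n → Bool) (k : Fin n) : FlipP x (bflip x k) (· = k) := by
  intro i
  simp only [bflip, Function.update_apply]
  split_ifs with h
  · subst h; rfl
  · rfl

lemma flipP_bflip2 (x : Fin n → Bool) (k k' : Fin n) (hne : k' ≠ k) :
    FlipP x (bflip (bflip x k) k') (fun i => i = k ∨ i = k') := by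
  intro i
  simp only [bflip, Function.update_apply]
  by_cases h1 : i = k' <;> by_cases h2 : i = k
  · exact absurd (h1.symm.trans h2) hne
  · subst h1; simp [hne, h2]
  · subst h2
    have : ¬ (i = k') := fun hh => hne hh.symm
    simp [h1, this]
  · simp [h1, h2]

lemma cubeAdj_nedge {x y : Fin n → Bool} (h : cubeAdj n x y) : NEdge x y := by
  rcases h with ⟨k, hk, rfl⟩ | ⟨k, hk2, ⟨h0, hx0, rfl⟩ | ⟨h0, hx0, rfl⟩⟩
  · exact Or.inl ⟨k, flipP_bflip x k, Or.inl hk⟩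
  · refine Or.inr ⟨k, ⟨(k : ℕ) - 1, lt_of_le_of_lt (Nat.sub_le _ _) k.isLt⟩,
      flipP_bflip2 x k _ ?_, ?_, hk2, hx0⟩
    · intro hh
      have := congrArg Fin.val hh
      simp at this
      omega
    · simp; omega
  · exact Or.inl ⟨k, flipP_bflip x k, Or.inr ⟨hk2, hx0⟩⟩

lemma case111 {x y z : Fin n → Bool} (h1 : SingE x y) (h2 : SingE y z)
    (h3 : SingE x z) : False := by
  obtain ⟨a, ha, -⟩ := h1
  obtain ⟨b, hb, -⟩ := h2
  obtain ⟨c, hc, -⟩ := h3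
  have key : ∀ i : Fin n, ((i = a) ↔ (i = b)) ↔ ¬ (i = c) :=
    fun i => ((comp_iff ha hb i).symm.trans (flip_iff hc i))
  have ka := key a
  have kb := key b
  have kc := key c
  simp only [Fin.ext_iff, true_iff, iff_true, not_true, iff_false, false_iff, not_not, not_true_eq_false, true_or, or_true, false_or, or_false, not_false_iff, not_false_eq_true] at ka kb kc
  omega

lemma case122 {x y z : Fin n → Bool} {a b b1 c c1 : Fin n}
    (h1 : FlipP x y (· = a))
    (h2 : FlipP y z (fun i => i = b ∨ i = b1)) (hb1 : (b1 : ℕ) + 1 = (b : ℕ))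
    (h3 : FlipP x z (fun i => i = c ∨ i = c1)) (hc1 : (c1 : ℕ) + 1 = (c : ℕ)) :
    False := by
  have key : ∀ i : Fin n, ((i = a) ↔ (i = b ∨ i = b1)) ↔ ¬ (i = c ∨ i = c1) :=
    fun i => ((comp_iff h1 h2 i).symm.trans (flip_iff h3 i))
  have ka := key a
  have kb := key b
  have kb1 := key b1
  have kc := key c
  have kc1 := key c1
  simp only [Fin.ext_iff, true_iff, iff_true, not_true, iff_false, false_iff, not_not, not_true_eq_false, true_or, or_true, false_or, or_false, not_false_iff, not_false_eq_true] at ka kb kb1 kc kc1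
  omega

lemma case222 {x y z : Fin n → Bool} {a a1 b b1 c c1 : Fin n}
    (h1 : FlipP x y (fun i => i = a ∨ i = a1)) (ha1 : (a1 : ℕ) + 1 = (a : ℕ))
    (h2 : FlipP y z (fun i => i = b ∨ i = b1)) (hb1 : (b1 : ℕ) + 1 = (b : ℕ))
    (h3 : FlipP x z (fun i => i = c ∨ i = c1)) (hc1 : (c1 : ℕ) + 1 = (c : ℕ)) :
    False := by
  have key : ∀ i : Fin n, ((i = a ∨ i = a1) ↔ (i = b ∨ i = b1)) ↔ ¬ (i = c ∨ i = c1) :=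
    fun i => ((comp_iff h1 h2 i).symm.trans (flip_iff h3 i))
  have ka := key a
  have ka1 := key a1
  have kb := key b
  have kb1 := key b1
  have kc := key c
  have kc1 := key c1
  simp only [Fin.ext_iff, true_iff, iff_true, not_true, iff_false, false_iff, not_not, not_true_eq_false, true_or, or_true, false_or, or_false, not_false_iff, not_false_eq_true] at ka ka1 kb kb1 kc kc1
  omega

lemma case112 {x y z : Fin n → Bool} {a b c c1 : Fin n}
    (h1 : FlipP x y (· = a))
    (sa : (a : ℕ) ≤ 1 ∨ (2 ≤ (a : ℕ) ∧ x ⟨0, a.pos⟩ = false))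
    (h2 : FlipP y z (· = b))
    (sb : (b : ℕ) ≤ 1 ∨ (2 ≤ (b : ℕ) ∧ y ⟨0, b.pos⟩ = false))
    (h3 : FlipP x z (fun i => i = c ∨ i = c1)) (hc1 : (c1 : ℕ) + 1 = (c : ℕ))
    (hc2 : 2 ≤ (c : ℕ)) (sc : x ⟨0, c.pos⟩ = true) : False := by
  have key : ∀ i : Fin n, ((i = a) ↔ (i = b)) ↔ ¬ (i = c ∨ i = c1) :=
    fun i => ((comp_iff h1 h2 i).symm.trans (flip_iff h3 i))
  have ka := key a
  have kb := key b
  have kc := key c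
  have kc1 := key c1
  simp only [Fin.ext_iff, true_iff, iff_true, not_true, iff_false, false_iff, not_not, not_true_eq_false, true_or, or_true, false_or, or_false, not_false_iff, not_false_eq_true] at ka kb kc kc1
  have hcase : (a : ℕ) = (c : ℕ) ∨ ((b : ℕ) = (c : ℕ) ∧ (a : ℕ) = (c1 : ℕ)) := by omega
  rcases hcase with hac | ⟨hbc, hac1⟩
  · rcases sa with h | ⟨-, hx0⟩
    · omega
    · have hx0' : x ⟨0, c.pos⟩ = false := hx0
      rw [sc] at hx0'
      exact Bool.noConfusion hx0'
  · rcases sb with h | ⟨-, hy0⟩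
    · omega
    · have h0 := h1 ⟨0, b.pos⟩
      rw [if_neg] at h0
      · have hx0' : x ⟨0, b.pos⟩ = true := sc
        rw [h0, hx0'] at hy0
        exact Bool.noConfusion hy0
      · intro hh
        have := congrArg Fin.val hh
        simp at this
        omega

lemma no_tri {x y z : Fin n → Bool} (h1 : NEdge x y) (h2 : NEdge y z)
    (h3 : NEdge x z) : False := by
  rcases h1 with s1 | p1 <;> rcases h2 with s2 | p2 <;> rcases h3 with s3 | p3
  · exact case111 s1 s2 s3
  · -- sing, sing, pair
    obtain ⟨a, ha, sa⟩ := s1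
    obtain ⟨b, hb, sb⟩ := s2
    obtain ⟨c, c1, hc, hc1, hc2, sc⟩ := p3
    exact case112 ha sa hb sb hc hc1 hc2 sc
  · -- sing x y, pair y z, sing x z : triangle (y, x, z)
    obtain ⟨a, ha, sa⟩ := s1.symm
    obtain ⟨b, hb, sb⟩ := s3
    obtain ⟨c, c1, hc, hc1, hc2, sc⟩ := p2
    exact case112 ha sa hb sb hc hc1 hc2 sc
  · -- sing x y, pair y z, pair x z
    obtain ⟨a, ha, -⟩ := s1
    obtain ⟨b, b1, hb, hb1, -, -⟩ := p2
    obtain ⟨c, c1, hc, hc1, -, -⟩ := p3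
    exact case122 ha hb hb1 hc hc1
  · -- pair x y, sing y z, sing x z : triangle (x, z, y)
    obtain ⟨a, ha, sa⟩ := s3
    obtain ⟨b, hb, sb⟩ := s2.symm
    obtain ⟨c, c1, hc, hc1, hc2, sc⟩ := p1
    exact case112 ha sa hb sb hc hc1 hc2 sc
  · -- pair x y, sing y z, pair x z : triangle (z, y, x)
    obtain ⟨a, ha, sa⟩ := s2.symm
    obtain ⟨b, b1, hb, hb1, -, -⟩ := p1.symm
    obtain ⟨c, c1, hc, hc1, -, -⟩ := p3.symm
    exact case122 ha hb hb1 hc hc1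
  · -- pair x y, pair y z, sing x z : triangle (x, z, y)
    obtain ⟨a, ha, sa⟩ := s3
    obtain ⟨b, b1, hb, hb1, -, -⟩ := p2.symm
    obtain ⟨c, c1, hc, hc1, -, -⟩ := p1
    exact case122 ha hb hb1 hc hc1
  · obtain ⟨a, a1, ha, ha1, -, -⟩ := p1
    obtain ⟨b, b1, hb, hb1, -, -⟩ := p2
    obtain ⟨c, c1, hc, hc1, -, -⟩ := p3
    exact case222 ha ha1 hb hb1 hc hc1

def Cl (s t : ℕ) (u v : (Fin s → Bool) × (Fin t → Bool) × Bool) : Prop :=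
  (u.1 = v.1 ∧ u.2.1 = v.2.1 ∧ u.2.2 = !v.2.2) ∨
  (u.2.2 = true ∧ v.2.2 = true ∧ u.1 = v.1 ∧ NEdge u.2.1 v.2.1) ∨
  (u.2.2 = false ∧ v.2.2 = false ∧ u.2.1 = v.2.1 ∧ NEdge u.1 v.1)

lemma NEdge_self {n : ℕ} (x : Fin n → Bool) : NEdge x x ↔ False :=
  iff_false_intro NEdge.irrefl

lemma cl_symm {s t : ℕ} {u v : (Fin s → Bool) × (Fin t → Bool) × Bool}
    (h : Cl s t u v) : Cl s t v u := by
  rcases h with ⟨h1, h2, h3⟩ | ⟨h1, h2, h3, h4⟩ | ⟨h1, h2, h3, h4⟩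
  · exact Or.inl ⟨h1.symm, h2.symm, by rw [h3]; simp⟩
  · exact Or.inr (Or.inl ⟨h2, h1, h3.symm, h4.symm⟩)
  · exact Or.inr (Or.inr ⟨h2, h1, h3.symm, h4.symm⟩)

lemma cl_tri {s t : ℕ} {u v w : (Fin s → Bool) × (Fin t → Bool) × Bool}
    (huv : Cl s t u v) (huw : Cl s t u w) (hvw : Cl s t v w) : False := by
  rcases huv with ⟨a1, a2, a3⟩ | ⟨a1, a2, a3, a4⟩ | ⟨a1, a2, a3, a4⟩ <;>
    rcases huw with ⟨b1, b2, b3⟩ | ⟨b1, b2, b3, b4⟩ | ⟨b1, b2, b3, b4⟩ <;>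
      rcases hvw with ⟨d1, d2, d3⟩ | ⟨d1, d2, d3, d4⟩ | ⟨d1, d2, d3, d4⟩
  all_goals try exact no_tri a4 d4 b4
  all_goals try exact (NEdge.irrefl (a2.symm.trans b2 ▸ d4))
  all_goals try exact (NEdge.irrefl (a1.symm.trans b1 ▸ d4))
  all_goals simp_all [NEdge_self]

lemma adj_cl {s t : ℕ} {u v : LeTQVert s t} (h : (LeTQ s t).Adj u v) :
    Cl s t u v := by
  have one : ∀ a b : LeTQVert s t, LeTQAdjOne s t a b → Cl s t a b := by
    rintro a b (⟨h1, h2, h3⟩ | ⟨h1, h2, h3, h4⟩ | ⟨h1, h2, h3, h4⟩)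
    · exact Or.inl ⟨h1, h2, h3⟩
    · exact Or.inr (Or.inl ⟨h1, h2, h3, cubeAdj_nedge h4⟩)
    · exact Or.inr (Or.inr ⟨h1, h2, h3, cubeAdj_nedge h4⟩)
  rcases h.2 with h' | h'
  · exact one _ _ h'
  · exact cl_symm (one _ _ h')

end Tri

/-- LeTQ(s,t) contains no triangle. -/
theorem stmt4 (s t : ℕ) (hs : 1 ≤ s) (ht : 1 ≤ t) :
    (LeTQ s t).CliqueFree 3 := by
  intro S hS
  rw [SimpleGraph.is3Clique_iff] at hS
  obtain ⟨u, v, w, huv, huw, hvw, -⟩ := hS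
  exact Tri.cl_tri (Tri.adj_cl huv) (Tri.adj_cl huw) (Tri.adj_cl hvw)
end

section
/- For s,t >= 1, any two distinct vertices of LeTQ(s,t) have at most two common neighbors; equivalently, LeTQ(s,t) contains no subgraph isomorphic to K_{2,3}. -/
/-- support pattern of a cube move, as a function on ℕ -/
def pat (c : Bool) (k : ℕ) (j : ℕ) : Bool :=
  xor (decide (j = k)) (decide (c = true ∧ 2 ≤ k ∧ j = k - 1))

lemma pat_true_iff (c : Bool) (k j : ℕ) :
    pat c k j = true ↔ (j = k ∨ (c = true ∧ 2 ≤ k ∧ j = k - 1)) := by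
  by_cases h1 : j = k <;> by_cases h2 : c = true ∧ 2 ≤ k ∧ j = k - 1 <;>
    simp [pat, h1, h2] <;> omega

lemma pat_self (c : Bool) (k : ℕ) : pat c k k = true :=
  (pat_true_iff c k k).mpr (Or.inl rfl)

lemma pat_top (c : Bool) {k j : ℕ} (h : k < j) : pat c k j = false := by
  rw [← Bool.not_eq_true, pat_true_iff]
  rintro (h1 | ⟨_, h2, h3⟩) <;> omega

/-- bool helpers -/
lemma xswap {p q r s : Bool} (h : xor p q = xor r s) : xor p r = xor q s := by
  revert h; revert p q r s; decide

lemma xcancel {p q r : Bool} (h : xor p q = xor r q) : p = r := by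
  revert h; revert p q r; decide

lemma conv4 {p q r s : Bool} (h : xor p q = xor r s) :
    ((p = true ↔ q = true) ∧ (r = true ↔ s = true)) ∨
    (¬(p = true ↔ q = true) ∧ ¬(r = true ↔ s = true)) := by
  revert h; revert p q r s; decide

/-- distinct pats differ -/
lemma pat_inj {a : Bool} {k k' : ℕ} (h : k < k') (E : ∀ j, pat a k j = pat a k' j) :
    False := by
  have := E k'
  rw [pat_self, pat_top a h] at this
  exact Bool.false_ne_true this

/-- top index equality -/
lemma top_eq {a b : Bool} {k k' l l' : ℕ} (hk : k < k') (hl : l < l')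
    (E : ∀ j, xor (pat a k j) (pat a k' j) = xor (pat b l j) (pat b l' j)) :
    k' = l' := by
  rcases lt_trichotomy k' l' with h | h | h
  · have := E l'
    rw [pat_top a (lt_trans hk h), pat_top a h, pat_top b hl, pat_self] at this
    exact absurd this (by decide)
  · exact h
  · have := E k'
    rw [pat_top a hk, pat_self, pat_top b (lt_trans hl h), pat_top b h] at this
    exact absurd this (by decide)

lemma M1solve {k l k3 : ℕ} (hk : k < k3) (hl : l < k3) (h3 : 2 ≤ k3)
    (E : ∀ j, xor (pat true k j) (pat false l j) = xor (pat true k3 j) (pat false k3 j)) :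
    k = k3 - 1 := by
  have h1 := conv4 (E k)
  have h2 := conv4 (E l)
  have h4 := conv4 (E (k3 - 1))
  have h5 := conv4 (E k3)
  have h6 := conv4 (E (k - 1))
  simp [pat_true_iff] at h1 h2 h4 h5 h6
  omega

lemma M2solve {k l k3 : ℕ} (hk : k < k3) (hl : l < k3) (h3 : 2 ≤ k3)
    (E : ∀ j, xor (pat false k j) (pat true l j) = xor (pat false k3 j) (pat true k3 j)) :
    k = k3 - 2 := by
  have h1 := conv4 (E k)
  have h2 := conv4 (E l)
  have h4 := conv4 (E (k3 - 1))
  have h5 := conv4 (E k3)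
  have h6 := conv4 (E (l - 1))
  simp [pat_true_iff] at h1 h2 h4 h5 h6
  omega

lemma pat_shape_delta {c : Bool} {k : ℕ} (h : ¬(c = true ∧ 2 ≤ k)) (j : ℕ) :
    pat c k j = decide (j = k) := by
  unfold pat
  have : decide (c = true ∧ 2 ≤ k ∧ j = k - 1) = false := by
    simp only [decide_eq_false_iff_not]
    rintro ⟨h1, h2, h3⟩; exact h ⟨h1, h2⟩
  rw [this, Bool.xor_false]

lemma key' (a b : Bool) {k1 l1 k2 l2 k3 l3 : ℕ}
    (E12 : ∀ j, xor (pat a k1 j) (pat b l1 j) = xor (pat a k2 j) (pat b l2 j))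
    (E13 : ∀ j, xor (pat a k1 j) (pat b l1 j) = xor (pat a k3 j) (pat b l3 j))
    (hD : ∃ j, xor (pat a k1 j) (pat b l1 j) = true)
    (h12 : k1 < k2) (h23 : k2 < k3) : False := by
  have h13 : k1 < k3 := lt_trans h12 h23
  have E23 : ∀ j, xor (pat a k2 j) (pat b l2 j) = xor (pat a k3 j) (pat b l3 j) :=
    fun j => (E12 j).symm.trans (E13 j)
  -- the l's are pairwise distinct
  have l12 : l1 ≠ l2 := by
    intro h; subst h
    exact pat_inj h12 (fun j => xcancel (E12 j))
  have l13 : l1 ≠ l3 := by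
    intro h; subst h
    exact pat_inj h13 (fun j => xcancel (E13 j))
  have l23 : l2 ≠ l3 := by
    intro h; subst h
    exact pat_inj h23 (fun j => xcancel (E23 j))
  have EA12 : ∀ j, xor (pat a k1 j) (pat a k2 j) = xor (pat b l1 j) (pat b l2 j) :=
    fun j => xswap (E12 j)
  have EA13 : ∀ j, xor (pat a k1 j) (pat a k3 j) = xor (pat b l1 j) (pat b l3 j) :=
    fun j => xswap (E13 j)
  have EA23 : ∀ j, xor (pat a k2 j) (pat a k3 j) = xor (pat b l2 j) (pat b l3 j) :=
    fun j => xswap (E23 j)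
  -- tops: max l1 l2 = k2
  have hl12 : l1 ≤ k2 ∧ l2 ≤ k2 := by
    rcases lt_or_gt_of_ne l12 with h | h
    · have := top_eq h12 h EA12; omega
    · have := top_eq h12 h (fun j => (EA12 j).trans (Bool.xor_comm _ _)); omega
  -- l3 = k3
  have hl3 : l3 = k3 := by
    rcases lt_or_gt_of_ne l13 with h | h
    · have := top_eq h13 h EA13; omega
    · have := top_eq h13 h (fun j => (EA13 j).trans (Bool.xor_comm _ _)); omega
  have hl2 : l2 < k3 := by omega
  have hl1 : l1 < k3 := by omega
  rw [hl3] at E13 E23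
  by_cases ha2 : a = true ∧ 2 ≤ k3 <;> by_cases hb2 : b = true ∧ 2 ≤ k3
  · -- both P-shaped at k3: D = 0
    obtain ⟨ha, hk3⟩ := ha2; obtain ⟨hb, _⟩ := hb2
    subst ha; subst hb
    obtain ⟨j0, hj0⟩ := hD
    rw [E13 j0, Bool.xor_self] at hj0
    exact Bool.false_ne_true hj0
  · -- a P-shaped, b δ-shaped: a = true, b = false
    obtain ⟨ha, hk3⟩ := ha2
    subst ha
    have hb : b = false := by
      rcases b with _ | _
      · rfl
      · exact absurd ⟨rfl, hk3⟩ hb2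
    subst hb
    have r1 := M1solve h13 hl1 hk3 E13
    have r2 := M1solve h23 hl2 hk3 E23
    omega
  · -- b P-shaped, a = false
    obtain ⟨hb, hk3⟩ := hb2
    subst hb
    have ha : a = false := by
      rcases a with _ | _
      · rfl
      · exact absurd ⟨rfl, hk3⟩ ha2
    subst ha
    have r1 := M2solve h13 hl1 hk3 E13
    have r2 := M2solve h23 hl2 hk3 E23
    omega
  · -- both δ-shaped: D = 0
    obtain ⟨j0, hj0⟩ := hD
    rw [E13 j0, pat_shape_delta ha2, pat_shape_delta hb2, Bool.xor_self] at hj0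
    exact Bool.false_ne_true hj0

lemma key (a b : Bool) {k1 l1 k2 l2 k3 l3 : ℕ}
    (E12 : ∀ j, xor (pat a k1 j) (pat b l1 j) = xor (pat a k2 j) (pat b l2 j))
    (E13 : ∀ j, xor (pat a k1 j) (pat b l1 j) = xor (pat a k3 j) (pat b l3 j))
    (hD : ∃ j, xor (pat a k1 j) (pat b l1 j) = true)
    (h12 : k1 ≠ k2) (h13 : k1 ≠ k3) (h23 : k2 ≠ k3) : False := by
  have E23 : ∀ j, xor (pat a k2 j) (pat b l2 j) = xor (pat a k3 j) (pat b l3 j) :=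
    fun j => (E12 j).symm.trans (E13 j)
  obtain ⟨j0, hj0⟩ := hD
  have hD2 : ∃ j, xor (pat a k2 j) (pat b l2 j) = true := ⟨j0, (E12 j0) ▸ hj0⟩
  have hD3 : ∃ j, xor (pat a k3 j) (pat b l3 j) = true := ⟨j0, (E13 j0) ▸ hj0⟩
  have hD1 : ∃ j, xor (pat a k1 j) (pat b l1 j) = true := ⟨j0, hj0⟩
  rcases lt_trichotomy k1 k2 with h1 | h1 | h1
  · rcases lt_trichotomy k2 k3 with h2 | h2 | h2
    · exact key' a b E12 E13 hD1 h1 h2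
    · exact absurd h2 h23
    · rcases lt_trichotomy k1 k3 with h3 | h3 | h3
      · exact key' a b E13 E12 hD1 h3 h2
      · exact absurd h3 h13
      · exact key' a b (fun j => (E13 j).symm) (fun j => (E13 j).symm.trans (E12 j)) hD3 h3 h1
  · exact absurd h1 h12
  · rcases lt_trichotomy k1 k3 with h2 | h2 | h2
    · exact key' a b (fun j => (E12 j).symm) (fun j => (E12 j).symm.trans (E13 j)) hD2 h1 h2
    · exact absurd h2 h13
    · rcases lt_trichotomy k2 k3 with h3 | h3 | h3
      · exact key' a b (fun j => (E12 j).symm.trans (E13 j)) (fun j => (E12 j).symm) hD2 h3 h2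
      · exact absurd h3 h23
      · exact key' a b (fun j => ((E12 j).symm.trans (E13 j)).symm) (fun j => (E13 j).symm) hD3 h3 h1

lemma pat_le_one {c : Bool} {k : ℕ} (h : k ≤ 1) (j : ℕ) : pat c k j = decide (j = k) :=
  pat_shape_delta (by omega) j

lemma pat_false (k j : ℕ) : pat false k j = decide (j = k) :=
  pat_shape_delta (by simp) j

lemma pat_true_ge2 {k : ℕ} (h : 2 ≤ k) (j : ℕ) :
    pat true k j = xor (decide (j = k)) (decide (j = k - 1)) := by
  simp [pat, h]

lemma xsolve {p q d : Bool} (h : p = xor q d) : q = xor p d := by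
  revert h; revert p q d; decide

lemma bflip_eval {n : ℕ} (x : Fin n → Bool) (k i : Fin n) :
    bflip x k i = xor (x i) (decide ((i : ℕ) = (k : ℕ))) := by
  by_cases h : i = k
  · subst h; simp [bflip]
  · have h' : ¬((i : ℕ) = (k : ℕ)) := fun hh => h (Fin.ext hh)
    simp [bflip, Function.update_of_ne h, h']

lemma not_xor_true (p : Bool) : xor p true ≠ p := by revert p; decide

lemma adj_iff {n : ℕ} (hn : 0 < n) (x z : Fin n → Bool) :
    (LTQ n).Adj x z ↔
      ∃ k : ℕ, k < n ∧ ∀ i : Fin n, z i = xor (x i) (pat (x ⟨0, hn⟩) k (i : ℕ)) := by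
  constructor
  · rintro ⟨hne, h | h⟩
    · rcases h with ⟨k, hk1, hzeq⟩ | ⟨k, hk2, ⟨h0, hx0, hzeq⟩ | ⟨h0, hx0, hzeq⟩⟩
      · refine ⟨(k : ℕ), k.isLt, fun i => ?_⟩
        rw [hzeq, bflip_eval, pat_le_one hk1]
      · refine ⟨(k : ℕ), k.isLt, fun i => ?_⟩
        have hx0' : x ⟨0, hn⟩ = true := hx0
        rw [hzeq, bflip_eval, bflip_eval, hx0', pat_true_ge2 hk2, Bool.xor_assoc]
      · refine ⟨(k : ℕ), k.isLt, fun i => ?_⟩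
        have hx0' : x ⟨0, hn⟩ = false := hx0
        rw [hzeq, bflip_eval, hx0', pat_false]
    · rcases h with ⟨k, hk1, hzeq⟩ | ⟨k, hk2, ⟨h0, hz0, hzeq⟩ | ⟨h0, hz0, hzeq⟩⟩
      · refine ⟨(k : ℕ), k.isLt, fun i => ?_⟩
        have := congrFun hzeq i
        rw [bflip_eval] at this
        rw [pat_le_one hk1]
        exact xsolve this
      · -- x = bflip (bflip z k) (k-1), z 0 = true, so x 0 = true
        have e : ∀ i : Fin n, x i = xor (z i) (xor (decide ((i:ℕ) = (k:ℕ)))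
            (decide ((i:ℕ) = (k:ℕ) - 1))) := by
          intro i
          have := congrFun hzeq i
          rw [bflip_eval, bflip_eval, Bool.xor_assoc] at this
          exact this
        have hx0' : x ⟨0, hn⟩ = true := by
          have := e ⟨0, hn⟩
          have d1 : decide (((⟨0, hn⟩ : Fin n) : ℕ) = (k:ℕ)) = false := by
            simp only [decide_eq_false_iff_not]; omega
          have d2 : decide (((⟨0, hn⟩ : Fin n) : ℕ) = (k:ℕ) - 1) = false := by
            simp only [decide_eq_false_iff_not]; omega
          rw [d1, d2] at this
          simp only [Bool.xor_false] at this
          rw [this]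
          exact hz0
        refine ⟨(k : ℕ), k.isLt, fun i => ?_⟩
        rw [hx0', pat_true_ge2 hk2]
        exact xsolve (e i)
      · have e : ∀ i : Fin n, x i = xor (z i) (decide ((i:ℕ) = (k:ℕ))) := by
          intro i
          have := congrFun hzeq i
          rw [bflip_eval] at this
          exact this
        have hx0' : x ⟨0, hn⟩ = false := by
          have := e ⟨0, hn⟩
          have d1 : decide (((⟨0, hn⟩ : Fin n) : ℕ) = (k:ℕ)) = false := by
            simp only [decide_eq_false_iff_not]; omega
          rw [d1] at this
          simp only [Bool.xor_false] at this
          rw [this]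
          exact hz0
        refine ⟨(k : ℕ), k.isLt, fun i => ?_⟩
        rw [hx0', pat_false]
        exact xsolve (e i)
  · rintro ⟨K, hK, hz⟩
    have hne : x ≠ z := by
      intro h
      have := hz ⟨K, hK⟩
      rw [← h] at this
      rw [pat_self] at this
      exact not_xor_true (x ⟨K, hK⟩) this.symm
    refine ⟨hne, Or.inl ?_⟩
    by_cases hK1 : K ≤ 1
    · left
      refine ⟨⟨K, hK⟩, hK1, funext fun i => ?_⟩
      rw [bflip_eval, ← pat_le_one (c := x ⟨0, hn⟩) hK1]
      exact hz i
    · right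
      push_neg at hK1
      refine ⟨⟨K, hK⟩, hK1, ?_⟩
      rcases Bool.eq_false_or_eq_true (x ⟨0, hn⟩) with hx0 | hx0
      · left
        refine ⟨hn, hx0, funext fun i => ?_⟩
        rw [bflip_eval, bflip_eval, Bool.xor_assoc, ← pat_true_ge2 hK1, ← hx0]
        exact hz i
      · right
        refine ⟨hn, hx0, funext fun i => ?_⟩
        rw [bflip_eval, ← pat_false (K) (i : ℕ), ← hx0]
        exact hz i


lemma xmix {p q m m' : Bool} (h : xor p m = xor q m') : xor m m' = xor p q := by
  revert h; revert p q m m'; decide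

lemma xne {p q : Bool} (h : p ≠ q) : xor p q = true := by
  revert h; revert p q; decide

lemma cube_common {n : ℕ} (hn : 0 < n) (x y : Fin n → Bool) (hxy : x ≠ y) :
    ((LTQ n).neighborSet x ∩ (LTQ n).neighborSet y).ncard ≤ 2 := by
  by_contra hcon
  push_neg at hcon
  obtain ⟨z1, hz1, z2, hz2, z3, hz3, h12, h13, h23⟩ :=
    (Set.two_lt_ncard (Set.toFinite _)).mp hcon
  set a := x ⟨0, hn⟩ with ha
  set b := y ⟨0, hn⟩ with hb
  obtain ⟨k1, hk1, e1⟩ := (adj_iff hn x z1).mp hz1.1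
  obtain ⟨l1, hl1, f1⟩ := (adj_iff hn y z1).mp hz1.2
  obtain ⟨k2, hk2, e2⟩ := (adj_iff hn x z2).mp hz2.1
  obtain ⟨l2, hl2, f2⟩ := (adj_iff hn y z2).mp hz2.2
  obtain ⟨k3, hk3, e3⟩ := (adj_iff hn x z3).mp hz3.1
  obtain ⟨l3, hl3, f3⟩ := (adj_iff hn y z3).mp hz3.2
  -- D description
  have ED : ∀ (k l : ℕ), k < n → l < n →
      (∀ i : Fin n, xor (x i) (pat a k (i : ℕ)) = xor (y i) (pat b l (i : ℕ))) →
      ∀ j : ℕ, xor (pat a k j) (pat b l j) =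
        if h : j < n then xor (x ⟨j, h⟩) (y ⟨j, h⟩) else false := by
    intro k l hk hl he j
    by_cases hj : j < n
    · rw [dif_pos hj]
      exact xmix (he ⟨j, hj⟩)
    · rw [dif_neg hj]
      rw [pat_top a (by omega), pat_top b (by omega)]
      rfl
  have D1 := ED k1 l1 hk1 hl1 (fun i => ((e1 i).symm.trans (f1 i)))
  have D2 := ED k2 l2 hk2 hl2 (fun i => ((e2 i).symm.trans (f2 i)))
  have D3 := ED k3 l3 hk3 hl3 (fun i => ((e3 i).symm.trans (f3 i)))
  have E12 : ∀ j, xor (pat a k1 j) (pat b l1 j) = xor (pat a k2 j) (pat b l2 j) :=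
    fun j => (D1 j).trans (D2 j).symm
  have E13 : ∀ j, xor (pat a k1 j) (pat b l1 j) = xor (pat a k3 j) (pat b l3 j) :=
    fun j => (D1 j).trans (D3 j).symm
  have hD : ∃ j, xor (pat a k1 j) (pat b l1 j) = true := by
    obtain ⟨i0, hi0⟩ := Function.ne_iff.mp hxy
    refine ⟨(i0 : ℕ), ?_⟩
    rw [D1 (i0 : ℕ)]
    rw [dif_pos i0.isLt]
    exact xne (by simpa using hi0)
  have kne : ∀ {k k' : ℕ} {w w' : Fin n → Bool},
      (∀ i : Fin n, w i = xor (x i) (pat a k (i:ℕ))) →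
      (∀ i : Fin n, w' i = xor (x i) (pat a k' (i:ℕ))) → w ≠ w' → k ≠ k' := by
    intro k k' w w' hw hw' hne he
    subst he
    exact hne (funext fun i => (hw i).trans (hw' i).symm)
  exact key a b E12 E13 hD (kne e1 e2 h12) (kne e1 e3 h13) (kne e2 e3 h23)

lemma prod_ext {s t : ℕ} {u v : LeTQVert s t} (h1 : u.1 = v.1) (h2 : u.2.1 = v.2.1)
    (h3 : u.2.2 = v.2.2) : u = v := by
  obtain ⟨a, b, c⟩ := u; obtain ⟨a', b', c'⟩ := v
  simp_all

lemma leAdj_iff {s t : ℕ} (u w : LeTQVert s t) :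
    (LeTQ s t).Adj u w ↔
      (w = (u.1, u.2.1, !u.2.2)) ∨
      (u.2.2 = true ∧ w.2.2 = true ∧ w.1 = u.1 ∧ (LTQ t).Adj u.2.1 w.2.1) ∨
      (u.2.2 = false ∧ w.2.2 = false ∧ w.2.1 = u.2.1 ∧ (LTQ s).Adj u.1 w.1) := by
  constructor
  · rintro ⟨hne, h | h⟩ <;> rcases h with ⟨h1, h2, h3⟩ | ⟨h1, h2, h3, h4⟩ | ⟨h1, h2, h3, h4⟩
    · left
      refine prod_ext h1.symm h2.symm ?_
      simp [h3]
    · right; left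
      have hne21 : u.2.1 ≠ w.2.1 := by
        intro he
        exact hne (prod_ext h3 he (h1.trans h2.symm))
      exact ⟨h1, h2, h3.symm, hne21, Or.inl h4⟩
    · right; right
      have hne1 : u.1 ≠ w.1 := by
        intro he
        exact hne (prod_ext he h3 (h1.trans h2.symm))
      exact ⟨h1, h2, h3.symm, hne1, Or.inl h4⟩
    · left
      exact prod_ext h1 h2 h3
    · right; left
      have hne21 : u.2.1 ≠ w.2.1 := by
        intro he
        exact hne (prod_ext h3.symm he (h2.trans h1.symm))
      exact ⟨h2, h1, h3, hne21, Or.inr h4⟩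
    · right; right
      have hne1 : u.1 ≠ w.1 := by
        intro he
        exact hne (prod_ext he h3.symm (h2.trans h1.symm))
      exact ⟨h2, h1, h3, hne1, Or.inr h4⟩
  · rintro (h | ⟨h1, h2, h3, hne21, hc⟩ | ⟨h1, h2, h3, hne1, hc⟩)
    · subst h
      refine ⟨?_, Or.inl (Or.inl ⟨rfl, rfl, (Bool.not_not _).symm⟩)⟩
      intro he
      have := congrArg (fun p => p.2.2) he
      simp at this
    · refine ⟨fun he => hne21 (congrArg (fun p => p.2.1) he), ?_⟩
      rcases hc with hc | hc
      · exact Or.inl (Or.inr (Or.inl ⟨h1, h2, h3.symm, hc⟩))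
      · exact Or.inr (Or.inr (Or.inl ⟨h2, h1, h3, hc⟩))
    · refine ⟨fun he => hne1 (congrArg (fun p => p.1) he), ?_⟩
      rcases hc with hc | hc
      · exact Or.inl (Or.inr (Or.inr ⟨h1, h2, h3.symm, hc⟩))
      · exact Or.inr (Or.inr (Or.inr ⟨h2, h1, h3, hc⟩))

lemma ncard_le_two_of_subset_pair {α : Type*} {S : Set α} {p q : α} (h : S ⊆ {p, q}) :
    S.ncard ≤ 2 :=
  le_trans (Set.ncard_le_ncard h ((Set.finite_singleton q).insert p))
    (le_trans (Set.ncard_insert_le _ _) (by simp))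

/-- Any two distinct vertices of LeTQ(s,t) have at most two common neighbors. -/

theorem stmt5 (s t : ℕ) (hs : 1 ≤ s) (ht : 1 ≤ t) (u v : LeTQVert s t) (huv : u ≠ v) :
    ((LeTQ s t).neighborSet u ∩ (LeTQ s t).neighborSet v).ncard ≤ 2 := by
  classical
  rcases Bool.eq_false_or_eq_true u.2.2 with hu | hu <;>
    rcases Bool.eq_false_or_eq_true v.2.2 with hv | hv
  · -- u true, v true : b-side cube
    by_cases hA : u.1 = v.1
    · have hB : u.2.1 ≠ v.2.1 := fun h => huv (prod_ext hA h (hu.trans hv.symm))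
      have hsub : (LeTQ s t).neighborSet u ∩ (LeTQ s t).neighborSet v ⊆
          (fun b' => (u.1, b', true)) ''
            ((LTQ t).neighborSet u.2.1 ∩ (LTQ t).neighborSet v.2.1) := by
        rintro w ⟨hw1, hw2⟩
        rcases (leAdj_iff u w).mp hw1 with hw | ⟨c1, c2, c3, c4⟩ | ⟨c1, c2, c3, c4⟩
        · exfalso
          have hwc : w.2.2 = !u.2.2 := by rw [hw]
          rcases (leAdj_iff v w).mp hw2 with hw' | ⟨d1, d2, d3, d4⟩ | ⟨d1, d2, d3, d4⟩
          · have h2 := congrArg (fun r : LeTQVert s t => r.2.1) (hw.symm.trans hw')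
            exact hB h2
          · rw [hwc, hu] at d2; exact absurd d2 (by decide)
          · rw [hv] at d1; exact absurd d1 (by decide)
        · rcases (leAdj_iff v w).mp hw2 with hw' | ⟨d1, d2, d3, d4⟩ | ⟨d1, d2, d3, d4⟩
          · exfalso
            have hwc : w.2.2 = !v.2.2 := by rw [hw']
            rw [hv] at hwc; rw [hwc] at c2; exact absurd c2 (by decide)
          · refine ⟨w.2.1, ⟨c4, d4⟩, ?_⟩
            exact prod_ext c3.symm rfl c2.symm
          · exfalso; rw [hv] at d1; exact absurd d1 (by decide)
        · exfalso; rw [hu] at c1; exact absurd c1 (by decide)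
      have hinj : Function.Injective
          (fun b' : Fin t → Bool => ((u.1, b', true) : LeTQVert s t)) :=
        fun p q h => congrArg (fun r : LeTQVert s t => r.2.1) h
      have hle := Set.ncard_le_ncard hsub (Set.toFinite _)
      rw [Set.ncard_image_of_injective _ hinj] at hle
      exact le_trans hle (cube_common ht u.2.1 v.2.1 hB)
    · refine ncard_le_two_of_subset_pair (p := u) (q := u) ?_
      rintro w ⟨hw1, hw2⟩
      exfalso
      rcases (leAdj_iff u w).mp hw1 with hw | ⟨c1, c2, c3, c4⟩ | ⟨c1, c2, c3, c4⟩
      · have hwc : w.2.2 = !u.2.2 := by rw [hw]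
        rcases (leAdj_iff v w).mp hw2 with hw' | ⟨d1, d2, d3, d4⟩ | ⟨d1, d2, d3, d4⟩
        · have h2 := congrArg (fun r : LeTQVert s t => r.1) (hw.symm.trans hw')
          exact hA h2
        · rw [hwc, hu] at d2; exact absurd d2 (by decide)
        · rw [hv] at d1; exact absurd d1 (by decide)
      · rcases (leAdj_iff v w).mp hw2 with hw' | ⟨d1, d2, d3, d4⟩ | ⟨d1, d2, d3, d4⟩
        · have hwc : w.2.2 = !v.2.2 := by rw [hw']
          rw [hv] at hwc; rw [hwc] at c2; exact absurd c2 (by decide)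
        · exact hA (c3.symm.trans d3)
        · rw [hv] at d1; exact absurd d1 (by decide)
      · rw [hu] at c1; exact absurd c1 (by decide)
  · -- u true, v false
    refine ncard_le_two_of_subset_pair (p := (u.1, u.2.1, false)) (q := (v.1, v.2.1, true)) ?_
    rintro w ⟨hw1, hw2⟩
    rcases (leAdj_iff u w).mp hw1 with hw | ⟨c1, c2, c3, c4⟩ | ⟨c1, c2, c3, c4⟩
    · refine Set.mem_insert_iff.mpr (Or.inl ?_)
      rw [hw, hu]
      rfl
    · rcases (leAdj_iff v w).mp hw2 with hw' | ⟨d1, d2, d3, d4⟩ | ⟨d1, d2, d3, d4⟩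
      · refine Set.mem_insert_iff.mpr (Or.inr (Set.mem_singleton_iff.mpr ?_))
        rw [hw', hv]
        rfl
      · exfalso; rw [hv] at d1; exact absurd d1 (by decide)
      · exfalso; rw [c2] at d2; exact absurd d2 (by decide)
    · exfalso; rw [hu] at c1; exact absurd c1 (by decide)
  · -- u false, v true
    refine ncard_le_two_of_subset_pair (p := (u.1, u.2.1, true)) (q := (v.1, v.2.1, false)) ?_
    rintro w ⟨hw1, hw2⟩
    rcases (leAdj_iff u w).mp hw1 with hw | ⟨c1, c2, c3, c4⟩ | ⟨c1, c2, c3, c4⟩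
    · refine Set.mem_insert_iff.mpr (Or.inl ?_)
      rw [hw, hu]
      rfl
    · exfalso; rw [hu] at c1; exact absurd c1 (by decide)
    · rcases (leAdj_iff v w).mp hw2 with hw' | ⟨d1, d2, d3, d4⟩ | ⟨d1, d2, d3, d4⟩
      · refine Set.mem_insert_iff.mpr (Or.inr (Set.mem_singleton_iff.mpr ?_))
        rw [hw', hv]
        rfl
      · exfalso; rw [c2] at d2; exact absurd d2 (by decide)
      · exfalso; rw [hv] at d1; exact absurd d1 (by decide)
  · -- u false, v false : a-side cube
    by_cases hA : u.2.1 = v.2.1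
    · have hB : u.1 ≠ v.1 := fun h => huv (prod_ext h hA (hu.trans hv.symm))
      have hsub : (LeTQ s t).neighborSet u ∩ (LeTQ s t).neighborSet v ⊆
          (fun a' => (a', u.2.1, false)) ''
            ((LTQ s).neighborSet u.1 ∩ (LTQ s).neighborSet v.1) := by
        rintro w ⟨hw1, hw2⟩
        rcases (leAdj_iff u w).mp hw1 with hw | ⟨c1, c2, c3, c4⟩ | ⟨c1, c2, c3, c4⟩
        · exfalso
          have hwc : w.2.2 = !u.2.2 := by rw [hw]
          rcases (leAdj_iff v w).mp hw2 with hw' | ⟨d1, d2, d3, d4⟩ | ⟨d1, d2, d3, d4⟩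
          · have h2 := congrArg (fun r : LeTQVert s t => r.1) (hw.symm.trans hw')
            exact hB h2
          · rw [hv] at d1; exact absurd d1 (by decide)
          · rw [hwc, hu] at d2; exact absurd d2 (by decide)
        · exfalso; rw [hu] at c1; exact absurd c1 (by decide)
        · rcases (leAdj_iff v w).mp hw2 with hw' | ⟨d1, d2, d3, d4⟩ | ⟨d1, d2, d3, d4⟩
          · exfalso
            have hwc : w.2.2 = !v.2.2 := by rw [hw']
            rw [hv] at hwc; rw [hwc] at c2; exact absurd c2 (by decide)
          · exfalso; rw [hv] at d1; exact absurd d1 (by decide)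
          · refine ⟨w.1, ⟨c4, d4⟩, ?_⟩
            exact prod_ext rfl c3.symm c2.symm
      have hinj : Function.Injective
          (fun a' : Fin s → Bool => ((a', u.2.1, false) : LeTQVert s t)) :=
        fun p q h => congrArg (fun r : LeTQVert s t => r.1) h
      have hle := Set.ncard_le_ncard hsub (Set.toFinite _)
      rw [Set.ncard_image_of_injective _ hinj] at hle
      exact le_trans hle (cube_common hs u.1 v.1 hB)
    · refine ncard_le_two_of_subset_pair (p := u) (q := u) ?_
      rintro w ⟨hw1, hw2⟩
      exfalso
      rcases (leAdj_iff u w).mp hw1 with hw | ⟨c1, c2, c3, c4⟩ | ⟨c1, c2, c3, c4⟩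
      · have hwc : w.2.2 = !u.2.2 := by rw [hw]
        rcases (leAdj_iff v w).mp hw2 with hw' | ⟨d1, d2, d3, d4⟩ | ⟨d1, d2, d3, d4⟩
        · have h2 := congrArg (fun r : LeTQVert s t => r.2.1) (hw.symm.trans hw')
          exact hA h2
        · rw [hv] at d1; exact absurd d1 (by decide)
        · rw [hwc, hu] at d2; exact absurd d2 (by decide)
      · rw [hu] at c1; exact absurd c1 (by decide)
      · rcases (leAdj_iff v w).mp hw2 with hw' | ⟨d1, d2, d3, d4⟩ | ⟨d1, d2, d3, d4⟩
        · have hwc : w.2.2 = !v.2.2 := by rw [hw']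
          rw [hv] at hwc; rw [hwc] at c2; exact absurd c2 (by decide)
        · rw [hv] at d1; exact absurd d1 (by decide)
        · exact hA (c3.symm.trans d3)
end

section
/- In LeTQ(s,t), for each fixed binary string B of length t, the induced subgraph on the set L_B of vertices of form A B 0 (A ranging over binary strings of length s) is isomorphic to the locally twisted cube LTQ_s; moreover there are no edges between L_B and L_{B'} for distinct B, B'. -/
lemma adjOne_false {s t : ℕ} (A A' : Fin s → Bool) (B B' : Fin t → Bool) :
    LeTQAdjOne s t (A, B, false) (A', B', false) ↔ (B = B' ∧ cubeAdj s A A') := by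
  simp [LeTQAdjOne]

/-- Each Class-0 cluster induces a copy of LTQ_s, and distinct Class-0 clusters have
no edges between them. -/
theorem stmt8 (s t : ℕ) (hs : 1 ≤ s) (ht : 1 ≤ t) :
    (∀ B : Fin t → Bool,
      Nonempty ((LeTQ s t).induce
        {u : LeTQVert s t | u.2.1 = B ∧ u.2.2 = false} ≃g LTQ s)) ∧
    ∀ B B' : Fin t → Bool, B ≠ B' →
      ∀ u v : LeTQVert s t, u.2.1 = B → u.2.2 = false → v.2.1 = B' → v.2.2 = false →
        ¬ (LeTQ s t).Adj u v := by
  constructor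
  · intro B
    refine ⟨⟨⟨fun u => u.1.1, fun A => ⟨(A, B, false), rfl, rfl⟩, ?_, fun A => rfl⟩, ?_⟩⟩
    · rintro ⟨⟨A, b, c⟩, h1, h2⟩
      simp only [Set.mem_setOf_eq] at h1 h2
      subst h1; subst h2; rfl
    · rintro ⟨⟨A, b, c⟩, hb, hc⟩ ⟨⟨A', b', c'⟩, hb', hc'⟩
      simp only [Set.mem_setOf_eq] at hb hc hb' hc'
      subst hb; subst hc; subst hb'; subst hc'
      constructor
      · rintro ⟨hne, h⟩
        refine ⟨fun he => hne (congrArg Prod.fst he), ?_⟩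
        rcases h with h | h
        · exact Or.inl ((adjOne_false A A' _ _).mpr ⟨rfl, h⟩)
        · exact Or.inr ((adjOne_false A' A _ _).mpr ⟨rfl, h⟩)
      · rintro ⟨hne, h⟩
        refine ⟨fun he => hne (by subst he; rfl), ?_⟩
        rcases h with h | h
        · exact Or.inl ((adjOne_false A A' _ _).mp h).2
        · exact Or.inr ((adjOne_false A' A _ _).mp h).2
  · rintro B B' hBB' ⟨A, b, c⟩ ⟨A', b2, c2⟩ hub huc hvb hvc hadj
    simp only at hub huc hvb hvc
    subst huc; subst hvc
    rcases hadj with ⟨_, h | h⟩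
    · exact hBB' (hub ▸ hvb ▸ ((adjOne_false A A' b b2).mp h).1)
    · exact hBB' (hub ▸ hvb ▸ (((adjOne_false A' A b2 b).mp h).1).symm)
end

section
/- Let 1 <= s <= t and 0 <= g <= s, and let A be the set of vertices of LeTQ(s,t) whose last s-g+t+1 bits are all 0 (the top g a-bits free). Then F_1 = N(A) is a g-good-neighbor conditional faulty set: every vertex of LeTQ(s,t) outside F_1 has at least g neighbors outside F_1. -/
/-- The open neighborhood of a vertex set. -/
def setNbhd {V : Type*} (G : SimpleGraph V) (A : Set V) : Set V :=
  {v | v ∉ A ∧ ∃ u ∈ A, G.Adj u v}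

namespace Stmt10Aux

variable {n : ℕ}

lemma bflip_apply_self (x : Fin n → Bool) (k : Fin n) : bflip x k k = !(x k) := by
  simp [bflip]

lemma bflip_apply_ne (x : Fin n → Bool) {k j : Fin n} (h : j ≠ k) : bflip x k j = x j :=
  Function.update_of_ne h _ _

lemma bflip_bflip (x : Fin n → Bool) (k : Fin n) : bflip (bflip x k) k = x := by
  funext j
  rcases eq_or_ne j k with rfl | h
  · simp [bflip]
  · rw [bflip_apply_ne _ h, bflip_apply_ne _ h]

/-- The canonical `k`-th neighbor of `x` in `LTQ n`. -/
def ltqNbr (x : Fin n → Bool) (k : Fin n) : Fin n → Bool :=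
  if (k : ℕ) ≤ 1 then bflip x k
  else if x ⟨0, k.pos⟩ = true then
    bflip (bflip x k) ⟨(k : ℕ) - 1, lt_of_le_of_lt (Nat.sub_le _ _) k.isLt⟩
  else bflip x k

lemma ltqNbr_apply_self (x : Fin n → Bool) (k : Fin n) : ltqNbr x k k = !(x k) := by
  unfold ltqNbr
  split_ifs with h1 h2
  · exact bflip_apply_self x k
  · rw [bflip_apply_ne _ (Fin.ne_of_val_ne (by simp; omega)), bflip_apply_self]
  · exact bflip_apply_self x k

lemma ltqNbr_apply_gt (x : Fin n → Bool) {k j : Fin n} (h : (k : ℕ) < (j : ℕ)) :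
    ltqNbr x k j = x j := by
  unfold ltqNbr
  have hjk : j ≠ k := Fin.ne_of_val_ne (by omega)
  split_ifs with h1 h2
  · exact bflip_apply_ne _ hjk
  · rw [bflip_apply_ne _ (Fin.ne_of_val_ne (by simp; omega)), bflip_apply_ne _ hjk]
  · exact bflip_apply_ne _ hjk

lemma ltqNbr_apply_lt (x : Fin n → Bool) {k j : Fin n} (h : (j : ℕ) + 1 < (k : ℕ)) :
    ltqNbr x k j = x j := by
  unfold ltqNbr
  have hjk : j ≠ k := Fin.ne_of_val_ne (by omega)
  split_ifs with h1 h2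
  · exact bflip_apply_ne _ hjk
  · rw [bflip_apply_ne _ (Fin.ne_of_val_ne (by simp; omega)), bflip_apply_ne _ hjk]
  · exact bflip_apply_ne _ hjk

lemma ltqNbr_of_x0_false {x : Fin n → Bool} (h0 : 0 < n) (hx : x ⟨0, h0⟩ = false)
    (k : Fin n) : ltqNbr x k = bflip x k := by
  unfold ltqNbr
  split_ifs with h1 h2
  · rfl
  · exact absurd h2 (by rw [show (⟨0, k.pos⟩ : Fin n) = ⟨0, h0⟩ from rfl, hx]; simp)
  · rfl

lemma ltqNbr_ne (x : Fin n → Bool) (k : Fin n) : ltqNbr x k ≠ x := by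
  intro h
  have := congrFun h k
  rw [ltqNbr_apply_self] at this
  simp at this

lemma ltqNbr_injective (x : Fin n → Bool) : Function.Injective (ltqNbr x) := by
  intro k k' h
  by_contra hne
  rcases Nat.lt_trichotomy (k : ℕ) (k' : ℕ) with hlt | heq | hgt
  · have h1 := congrFun h k'
    rw [ltqNbr_apply_gt x hlt, ltqNbr_apply_self] at h1
    simp at h1
  · exact hne (Fin.ext heq)
  · have h1 := congrFun h k
    rw [ltqNbr_apply_self, ltqNbr_apply_gt x hgt] at h1
    simp at h1

lemma cubeAdj_ltqNbr (x : Fin n → Bool) (k : Fin n) : cubeAdj n x (ltqNbr x k) := by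
  unfold ltqNbr
  split_ifs with h1 h2
  · exact Or.inl ⟨k, h1, rfl⟩
  · exact Or.inr ⟨k, by omega, Or.inl ⟨k.pos, h2, rfl⟩⟩
  · exact Or.inr ⟨k, by omega, Or.inr ⟨k.pos, by simpa using h2, rfl⟩⟩

/-- If `x` has all bits below `m ≥ 1` zero, any `cubeAdj` relation with `x`
is a single-bit flip. -/
lemma single_flip {m : ℕ} (hm : 1 ≤ m) {x y : Fin n → Bool}
    (hx : ∀ j : Fin n, (j : ℕ) < m → x j = false)
    (h : cubeAdj n x y ∨ cubeAdj n y x) : ∃ k : Fin n, y = bflip x k := by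
  rcases h with h | h
  · rcases h with ⟨k, _, hy⟩ | ⟨k, hk2, ⟨h0, hx0, hy⟩ | ⟨h0, _, hy⟩⟩
    · exact ⟨k, hy⟩
    · exact absurd hx0 (by rw [hx ⟨0, h0⟩ (by simp; omega)]; simp)
    · exact ⟨k, hy⟩
  · rcases h with ⟨k, _, hxe⟩ | ⟨k, hk2, ⟨h0, hy0, hxe⟩ | ⟨h0, _, hxe⟩⟩
    · exact ⟨k, by rw [hxe, bflip_bflip]⟩
    · exfalso
      have h1 : x ⟨0, h0⟩ = y ⟨0, h0⟩ := by
        rw [hxe, bflip_apply_ne _ (Fin.ne_of_val_ne (by simp; omega)),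
          bflip_apply_ne _ (Fin.ne_of_val_ne (by simp; omega))]
      rw [hx ⟨0, h0⟩ (by simp; omega), hy0] at h1
      simp at h1
    · exact ⟨k, by rw [hxe, bflip_bflip]⟩

lemma le_ncard_of_inj {V : Type*} {S : Set V} (hS : S.Finite) {g : ℕ} (f : Fin g → V)
    (hinj : Function.Injective f) (hmem : ∀ i, f i ∈ S) : g ≤ S.ncard := by
  have h1 : (Set.range f).ncard = g := by
    rw [← Nat.card_coe_set_eq, Nat.card_range_of_injective hinj,
      Nat.card_eq_fintype_card, Fintype.card_fin]
  calc g = (Set.range f).ncard := h1.symm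
    _ ≤ S.ncard := Set.ncard_le_ncard (Set.range_subset_iff.2 hmem) hS

end Stmt10Aux

namespace Stmt10Aux

def ASet (s t g : ℕ) : Set (LeTQVert s t) :=
  {u | (∀ j : Fin s, (j : ℕ) < s - g → u.1 j = false) ∧
       (∀ j : Fin t, u.2.1 j = false) ∧ u.2.2 = false}

variable {s t g : ℕ}

lemma not_mem_nbhd_of_b_true (w : LeTQVert s t) (j : Fin t) (hj : w.2.1 j = true) :
    w ∉ setNbhd (LeTQ s t) (ASet s t g) := by
  rintro ⟨-, u, ⟨hu1, hu2, hu3⟩, -, h | h⟩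
  · rcases h with ⟨-, hb, -⟩ | ⟨hc, -⟩ | ⟨-, -, hb, -⟩
    · have := hu2 j; rw [hb, hj] at this; simp at this
    · rw [hu3] at hc; simp at hc
    · have := hu2 j; rw [hb, hj] at this; simp at this
  · rcases h with ⟨-, hb, -⟩ | ⟨-, hc, -⟩ | ⟨-, -, hb, -⟩
    · have := hu2 j; rw [← hb, hj] at this; simp at this
    · rw [hu3] at hc; simp at hc
    · have := hu2 j; rw [← hb, hj] at this; simp at this

lemma not_mem_nbhd_of_mem {w : LeTQVert s t} (hw : w ∈ ASet s t g) :
    w ∉ setNbhd (LeTQ s t) (ASet s t g) := fun h => h.1 hw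

lemma not_mem_nbhd_c1 (y : Fin s → Bool) (b' : Fin t → Bool) (j : Fin s)
    (hjm : (j : ℕ) < s - g) (hy : y j = true) :
    (⟨y, b', true⟩ : LeTQVert s t) ∉ setNbhd (LeTQ s t) (ASet s t g) := by
  rintro ⟨-, u, ⟨hu1, hu2, hu3⟩, -, h | h⟩
  · rcases h with ⟨ha, -, -⟩ | ⟨hc, -⟩ | ⟨-, hc, -⟩
    · have hya : u.1 = y := ha
      have := hu1 j hjm; rw [hya, hy] at this; simp at this
    · rw [hu3] at hc; simp at hc
    · simp at hc
  · rcases h with ⟨ha, -, -⟩ | ⟨-, hc, -⟩ | ⟨hc, -⟩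
    · have hya : y = u.1 := ha
      have := hu1 j hjm; rw [← hya, hy] at this; simp at this
    · rw [hu3] at hc; simp at hc
    · simp at hc

lemma not_mem_nbhd_c0 (hm : 1 ≤ s - g) (y : Fin s → Bool) (b' : Fin t → Bool)
    {j1 j2 : Fin s} (hne : j1 ≠ j2) (hj1m : (j1 : ℕ) < s - g) (hj2m : (j2 : ℕ) < s - g)
    (hy1 : y j1 = true) (hy2 : y j2 = true) :
    (⟨y, b', false⟩ : LeTQVert s t) ∉ setNbhd (LeTQ s t) (ASet s t g) := by
  have key : ∀ x : Fin s → Bool, (∀ j : Fin s, (j : ℕ) < s - g → x j = false) →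
      (cubeAdj s x y ∨ cubeAdj s y x) → False := by
    intro x hx hadj
    obtain ⟨k, hk⟩ := single_flip hm hx hadj
    rcases eq_or_ne j1 k with rfl | hk1
    · have := hx j2 hj2m
      rw [hk, bflip_apply_ne _ (Ne.symm hne)] at hy2
      rw [hy2] at this; simp at this
    · have := hx j1 hj1m
      rw [hk, bflip_apply_ne _ hk1] at hy1
      rw [hy1] at this; simp at this
  rintro ⟨-, u, ⟨hu1, hu2, hu3⟩, -, h | h⟩
  · rcases h with ⟨-, -, hc⟩ | ⟨hc, -⟩ | ⟨-, -, -, hA⟩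
    · rw [hu3] at hc; simp at hc
    · rw [hu3] at hc; simp at hc
    · exact key u.1 hu1 (Or.inl hA)
  · rcases h with ⟨-, -, hc⟩ | ⟨hc, -⟩ | ⟨-, -, -, hA⟩
    · rw [hu3] at hc; simp at hc
    · simp at hc
    · exact key u.1 hu1 (Or.inr hA)

lemma mem_nbhd_single {j1 : Fin s} (hj1 : (j1 : ℕ) < s - g) {y : Fin s → Bool}
    (hy : y j1 = true) (hone : ∀ j : Fin s, (j : ℕ) < s - g → j ≠ j1 → y j = false)
    {b' : Fin t → Bool} (hb' : ∀ j, b' j = false) :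
    (⟨y, b', false⟩ : LeTQVert s t) ∈ setNbhd (LeTQ s t) (ASet s t g) := by
  have h0s : 0 < s := j1.pos
  set x : Fin s → Bool := Function.update y j1 false with hxdef
  have hxj : ∀ j : Fin s, (j : ℕ) < s - g → x j = false := by
    intro j hj
    rcases eq_or_ne j j1 with rfl | hne
    · simp [hxdef]
    · rw [hxdef, Function.update_of_ne hne]; exact hone j hj hne
  have hybf : y = bflip x j1 := by
    funext j
    rcases eq_or_ne j j1 with rfl | hne
    · rw [bflip_apply_self, hxdef]; simp [hy]
    · rw [bflip_apply_ne _ hne, hxdef, Function.update_of_ne hne]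
  have hca : cubeAdj s x y := by
    rcases le_or_gt (j1 : ℕ) 1 with h1 | h1
    · exact Or.inl ⟨j1, h1, hybf⟩
    · refine Or.inr ⟨j1, h1, Or.inr ⟨h0s, ?_, hybf⟩⟩
      exact hxj ⟨0, h0s⟩ (by simp; omega)
  refine ⟨?_, ⟨x, b', false⟩, ⟨hxj, hb', rfl⟩, ?_, Or.inl (Or.inr (Or.inr ⟨rfl, rfl, rfl, hca⟩))⟩
  · rintro ⟨hA, -, -⟩
    have h2 : y j1 = false := hA j1 hj1
    rw [hy] at h2; simp at h2
  · intro h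
    have h1 : x j1 = y j1 := congrArg (fun p => p.1 j1) h
    rw [hxdef, Function.update_self, hy] at h1
    simp at h1

end Stmt10Aux

open Stmt10Aux

/-- F1 = N(A) is a g-good-neighbor conditional faulty set. -/
theorem stmt10 (s t g : ℕ) (hs : 1 ≤ s) (hst : s ≤ t) (hg : g ≤ s) :
    let A : Set (LeTQVert s t) :=
      {u | (∀ j : Fin s, (j : ℕ) < s - g → u.1 j = false) ∧
           (∀ j : Fin t, u.2.1 j = false) ∧ u.2.2 = false}
    ∀ v ∉ setNbhd (LeTQ s t) A,
      g ≤ ((LeTQ s t).neighborSet v \ setNbhd (LeTQ s t) A).ncard := by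
  intro A v hv
  have hv' : v ∉ setNbhd (LeTQ s t) (ASet s t g) := hv
  show g ≤ ((LeTQ s t).neighborSet v \ setNbhd (LeTQ s t) (ASet s t g)).ncard
  clear hv
  rcases Nat.eq_zero_or_pos g with hg0 | hgpos
  · exact hg0 ▸ Nat.zero_le _
  obtain ⟨a, b, c⟩ := v
  cases c with
  | true =>
    -- c = 1 : use the `b`-neighbors (and the `c`-flip if one of them is zero)
    refine le_ncard_of_inj (Set.toFinite _)
      (fun i : Fin g =>
        if ltqNbr b (Fin.castLE (hg.trans hst) i) = (fun _ => false) then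
          ((a, b, false) : LeTQVert s t)
        else (a, ltqNbr b (Fin.castLE (hg.trans hst) i), true)) ?_ ?_
    · intro i i' heq
      dsimp only at heq
      split_ifs at heq with h1 h2 h2
      · have := ltqNbr_injective b (h1.trans h2.symm)
        exact Fin.ext (by simpa using congrArg Fin.val this)
      · simpa using congrArg (fun p => p.2.2) heq
      · simpa using congrArg (fun p => p.2.2) heq
      · have := ltqNbr_injective b (congrArg (fun p => p.2.1) heq)
        exact Fin.ext (by simpa using congrArg Fin.val this)
    · intro i
      rw [Set.mem_diff, SimpleGraph.mem_neighborSet]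
      split_ifs with hz
      · constructor
        · refine ⟨?_, Or.inl (Or.inl ⟨rfl, rfl, rfl⟩)⟩
          intro h; simpa using congrArg (fun p => p.2.2) h
        · have h1 := congrFun hz (Fin.castLE (hg.trans hst) i)
          rw [ltqNbr_apply_self] at h1
          simp only [Bool.not_eq_false'] at h1
          exact not_mem_nbhd_of_b_true _ _ h1
      · constructor
        · refine ⟨?_, Or.inl (Or.inr (Or.inl ⟨rfl, rfl, rfl, cubeAdj_ltqNbr b _⟩))⟩
          intro h; exact ltqNbr_ne b _ (congrArg (fun p => p.2.1) h).symm
        · obtain ⟨j, hj⟩ : ∃ j, ltqNbr b (Fin.castLE (hg.trans hst) i) j = true := by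
            by_contra hno; push_neg at hno
            exact hz (funext fun j => by simpa using hno j)
          exact not_mem_nbhd_of_b_true _ j hj
  | false =>
    by_cases hb : ∀ j : Fin t, b j = false
    · by_cases hA : ∀ j : Fin s, (j : ℕ) < s - g → a j = false
      · -- v ∈ A : use the high `a`-neighbors, which stay in A
        refine le_ncard_of_inj (Set.toFinite _)
          (fun i : Fin g =>
            ((ltqNbr a ⟨s - g + i, by have := i.isLt; omega⟩, b, false) : LeTQVert s t))
          ?_ ?_
        · intro i i' heq
          have h1 := ltqNbr_injective a (congrArg (fun p => p.1) heq)
          exact Fin.ext (by have := congrArg Fin.val h1; simp at this; omega)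
        · intro i
          rw [Set.mem_diff, SimpleGraph.mem_neighborSet]
          constructor
          · refine ⟨?_, Or.inl (Or.inr (Or.inr ⟨rfl, rfl, rfl, cubeAdj_ltqNbr a _⟩))⟩
            intro h; exact ltqNbr_ne a _ (congrArg (fun p => p.1) h).symm
          · refine not_mem_nbhd_of_mem ⟨?_, hb, rfl⟩
            intro j hj
            show ltqNbr a _ j = false
            have hx0 : a ⟨0, hs⟩ = false := hA ⟨0, hs⟩ (by simp; omega)
            rw [ltqNbr_of_x0_false hs hx0,
              bflip_apply_ne _ (Fin.ne_of_val_ne (by simp; omega))]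
            exact hA j hj
      · -- v ∉ A, b = 0, c = 0 : the hard case
        push_neg at hA
        obtain ⟨j1, hj1m, hj1⟩ := hA
        have hj1' : a j1 = true := by simpa using hj1
        have hm1 : 1 ≤ s - g := by omega
        obtain ⟨j2, hj2m, hj2', hj21⟩ :
            ∃ j2 : Fin s, (j2 : ℕ) < s - g ∧ a j2 = true ∧ j2 ≠ j1 := by
          by_contra hno; push_neg at hno
          refine hv' (mem_nbhd_single hj1m hj1' (fun j hj hne => ?_) hb)
          by_contra hf
          exact hne (hno j hj (by simpa using hf))
        refine le_ncard_of_inj (Set.toFinite _)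
          (fun i : Fin g =>
            if (i : ℕ) = 0 then ((a, b, true) : LeTQVert s t)
            else (ltqNbr a ⟨s - g + i, by have := i.isLt; omega⟩, b, false)) ?_ ?_
        · intro i i' heq
          dsimp only at heq
          split_ifs at heq with h1 h2 h2
          · exact Fin.ext (h1.trans h2.symm)
          · simpa using congrArg (fun p => p.2.2) heq
          · simpa using congrArg (fun p => p.2.2) heq
          · have h3 := ltqNbr_injective a (congrArg (fun p => p.1) heq)
            exact Fin.ext (by have := congrArg Fin.val h3; simp at this; omega)
        · intro i
          rw [Set.mem_diff, SimpleGraph.mem_neighborSet]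
          split_ifs with h0
          · constructor
            · refine ⟨?_, Or.inl (Or.inl ⟨rfl, rfl, rfl⟩)⟩
              intro h; simpa using congrArg (fun p => p.2.2) h
            · exact not_mem_nbhd_c1 a b j1 hj1m hj1'
          · constructor
            · refine ⟨?_, Or.inl (Or.inr (Or.inr ⟨rfl, rfl, rfl, cubeAdj_ltqNbr a _⟩))⟩
              intro h; exact ltqNbr_ne a _ (congrArg (fun p => p.1) h).symm
            · refine not_mem_nbhd_c0 hm1 _ b hj21 hj2m hj1m ?_ ?_
              · rw [ltqNbr_apply_lt a (by simp; omega)]; exact hj2'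
              · rw [ltqNbr_apply_lt a (by simp; omega)]; exact hj1'
    · -- b ≠ 0, c = 0 : use the `a`-neighbors
      push_neg at hb
      obtain ⟨j0, hj0⟩ := hb
      have hj0' : b j0 = true := by simpa using hj0
      refine le_ncard_of_inj (Set.toFinite _)
        (fun i : Fin g => ((ltqNbr a (Fin.castLE hg i), b, false) : LeTQVert s t)) ?_ ?_
      · intro i i' heq
        have h1 := ltqNbr_injective a (congrArg (fun p => p.1) heq)
        exact Fin.ext (by simpa using congrArg Fin.val h1)
      · intro i
        rw [Set.mem_diff, SimpleGraph.mem_neighborSet]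
        constructor
        · refine ⟨?_, Or.inl (Or.inr (Or.inr ⟨rfl, rfl, rfl, cubeAdj_ltqNbr a _⟩))⟩
          intro h; exact ltqNbr_ne a _ (congrArg (fun p => p.1) h).symm
        · exact not_mem_nbhd_of_b_true _ j0 hj0'
end
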